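/- Let Φ = Φ₊ − id where Φ₊ is an n×n nonnegative irreducible matrix with zero diagonal and all column sums of Φ equal to zero, and let σ ∈ ℝ^n be strictly positive. Then the kernel of σ▷Φ contains a strictly positive vector x, and this positive solution of (σ▷Φ)x = 0 is unique up to positive scalar multiples. -/
import Mathlib


/-- Column-wise scaling of a matrix `Φ` by a vector `σ`. -/
def colScale {n : ℕ} (σ : Fin n → ℝ) (Φ : Matrix (Fin n) (Fin n) ℝ) :
    Matrix (Fin n) (Fin n) ℝ :=
  Matrix.of fun i j => σ j * Φ i j

/-- A nonnegative matrix is irreducible if its associated directed graph is strongly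
connected, i.e. some power connects every pair of indices with a positive entry. -/
def MatIrreducible {n : ℕ} (M : Matrix (Fin n) (Fin n) ℝ) : Prop :=
  ∀ i j, ∃ k : ℕ, 0 < (M ^ k) i j

private lemma pow_entry_nonneg' {n : ℕ} {M : Matrix (Fin n) (Fin n) ℝ}
    (h : ∀ i j, 0 ≤ M i j) (k : ℕ) : ∀ i j, 0 ≤ (M ^ k) i j := by
  induction k with
  | zero =>
    intro i j
    rw [pow_zero]
    by_cases hij : i = j <;> simp [Matrix.one_apply, hij]
  | succ m ih =>
    intro i j
    rw [pow_succ, Matrix.mul_apply]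
    exact Finset.sum_nonneg fun l _ => mul_nonneg (ih i l) (h l j)

private lemma pow_fixed' {n : ℕ} {M : Matrix (Fin n) (Fin n) ℝ} {w : Fin n → ℝ}
    (hw : M.mulVec w = w) (k : ℕ) : (M ^ k).mulVec w = w := by
  induction k with
  | zero => simp
  | succ m ih => rw [pow_succ, ← Matrix.mulVec_mulVec, hw, ih]

private lemma kernel_pos' {n : ℕ} {M : Matrix (Fin n) (Fin n) ℝ} {w : Fin n → ℝ}
    (hM : ∀ i j, 0 ≤ M i j) (hirr : MatIrreducible M)
    (hw : M.mulVec w = w) (hw0 : ∀ i, 0 ≤ w i) (hne : w ≠ 0) :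
    ∀ i, 0 < w i := by
  obtain ⟨j, hj⟩ : ∃ j, 0 < w j := by
    by_contra h
    push_neg at h
    exact hne (funext fun i => le_antisymm (h i) (hw0 i))
  intro i
  obtain ⟨k, hk⟩ := hirr i j
  have h1 : (M ^ k) i j * w j ≤ ∑ l, (M ^ k) i l * w l :=
    Finset.single_le_sum
      (fun l _ => mul_nonneg (pow_entry_nonneg' hM k i l) (hw0 l)) (Finset.mem_univ j)
  have h2 : ∑ l, (M ^ k) i l * w l = w i := by
    have := congrFun (pow_fixed' hw k) i
    rwa [Matrix.mulVec, dotProduct] at this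
  calc 0 < (M ^ k) i j * w j := mul_pos hk hj
    _ ≤ ∑ l, (M ^ k) i l * w l := h1
    _ = w i := h2

/-- If `Φ = Φ₊ - id` with `Φ₊` nonnegative irreducible with zero diagonal, the column
sums of `Φ` vanish, and `σ > 0`, then the kernel of `σ ▷ Φ` contains a strictly positive
vector, unique up to positive scalar multiples. -/
theorem colScale_kernel_positive {n : ℕ}
    (Φ Φp : Matrix (Fin n) (Fin n) ℝ) (σ : Fin n → ℝ)
    (hΦ : Φ = Φp - 1)
    (hΦp_nonneg : ∀ i j, 0 ≤ Φp i j)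
    (hΦp_diag : ∀ i, Φp i i = 0)
    (hΦp_irr : MatIrreducible Φp)
    (hcol : ∀ j, ∑ i, Φ i j = 0)
    (hσ : ∀ i, 0 < σ i) :
    ∃ x : Fin n → ℝ, (∀ i, 0 < x i) ∧ (colScale σ Φ).mulVec x = 0 ∧
      ∀ y : Fin n → ℝ, (∀ i, 0 < y i) → (colScale σ Φ).mulVec y = 0 →
        ∃ c : ℝ, 0 < c ∧ y = c • x := by
  rcases Nat.eq_zero_or_pos n with h0 | hn
  · subst h0
    exact ⟨0, fun i => i.elim0, funext fun i => i.elim0,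
      fun y _ _ => ⟨1, one_pos, funext fun i => i.elim0⟩⟩
  have hNE : Nonempty (Fin n) := ⟨⟨0, hn⟩⟩
  -- column sums of Φp are 1
  have hcolp : ∀ j, ∑ i, Φp i j = 1 := by
    intro j
    have := hcol j
    rw [hΦ] at this
    simp only [Matrix.sub_apply] at this
    rw [Finset.sum_sub_distrib] at this
    have h1 : ∑ i, (1 : Matrix (Fin n) (Fin n) ℝ) i j = 1 := by
      simp [Matrix.one_apply]
    linarith
  -- kernel of Φ ↔ fixed point of Φp
  have hker : ∀ v : Fin n → ℝ, Φ.mulVec v = 0 ↔ Φp.mulVec v = v := by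
    intro v
    rw [hΦ, Matrix.sub_mulVec, Matrix.one_mulVec, sub_eq_zero]
  -- fixed points yield nonneg fixed points via abs
  have habs : ∀ z : Fin n → ℝ, Φp.mulVec z = z →
      Φp.mulVec (fun i => |z i|) = fun i => |z i| := by
    intro z hz
    have hle : ∀ i, |z i| ≤ (Φp.mulVec (fun i => |z i|)) i := by
      intro i
      have h1 : |z i| = |∑ j, Φp i j * z j| := by
        rw [← congrFun hz i]; rfl
      rw [h1]
      calc |∑ j, Φp i j * z j| ≤ ∑ j, |Φp i j * z j| := Finset.abs_sum_le_sum_abs _ _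
        _ = ∑ j, Φp i j * |z j| := by
            refine Finset.sum_congr rfl fun j _ => ?_
            rw [abs_mul, abs_of_nonneg (hΦp_nonneg i j)]
        _ = (Φp.mulVec (fun i => |z i|)) i := rfl
    have hsum : ∑ i, ((Φp.mulVec (fun i => |z i|)) i - |z i|) = 0 := by
      rw [Finset.sum_sub_distrib]
      have h2 : ∑ i, (Φp.mulVec (fun i => |z i|)) i = ∑ j, |z j| := by
        calc ∑ i, (Φp.mulVec (fun i => |z i|)) i
            = ∑ i, ∑ j, Φp i j * |z j| := rfl
          _ = ∑ j, ∑ i, Φp i j * |z j| := Finset.sum_comm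
          _ = ∑ j, (∑ i, Φp i j) * |z j| := by
              refine Finset.sum_congr rfl fun j _ => ?_
              rw [Finset.sum_mul]
          _ = ∑ j, |z j| := by
              refine Finset.sum_congr rfl fun j _ => ?_
              rw [hcolp j, one_mul]
      rw [h2, sub_self]
    have hzero : ∀ i ∈ Finset.univ, (Φp.mulVec (fun i => |z i|)) i - |z i| = 0 := by
      rw [← Finset.sum_eq_zero_iff_of_nonneg (fun i _ => sub_nonneg.mpr (hle i))]
      exact hsum
    funext i
    have := hzero i (Finset.mem_univ i)
    linarith
  -- existence of a nonzero kernel vector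
  have hdet : Φ.det = 0 := by
    rw [← Matrix.det_transpose]
    rw [← Matrix.exists_mulVec_eq_zero_iff]
    refine ⟨1, ?_, ?_⟩
    · intro h
      have := congrFun h ⟨0, hn⟩
      simp at this
    · funext i
      have : (Φ.transpose.mulVec 1) i = ∑ j, Φ j i := by
        simp [Matrix.mulVec, dotProduct, Matrix.transpose_apply]
      rw [this, hcol i]; rfl
  obtain ⟨z, hz0, hz⟩ := (Matrix.exists_mulVec_eq_zero_iff).mpr hdet
  -- the positive kernel vector for Φ
  set x' : Fin n → ℝ := fun i => |z i| with hx'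
  have hx'fix : Φp.mulVec x' = x' := habs z ((hker z).mp hz)
  have hx'ne : x' ≠ 0 := by
    intro h
    apply hz0
    funext i
    have := congrFun h i
    simpa [hx', abs_eq_zero] using this
  have hx'pos : ∀ i, 0 < x' i :=
    kernel_pos' hΦp_nonneg hΦp_irr hx'fix (fun i => abs_nonneg _) hx'ne
  -- transport through colScale: (colScale σ Φ).mulVec y = Φ.mulVec (σ * y)
  have htrans : ∀ y : Fin n → ℝ,
      (colScale σ Φ).mulVec y = Φ.mulVec (fun i => σ i * y i) := by
    intro y
    funext i
    simp only [Matrix.mulVec, dotProduct, colScale, Matrix.of_apply]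
    refine Finset.sum_congr rfl fun j _ => ?_
    ring
  refine ⟨fun i => x' i / σ i, fun i => div_pos (hx'pos i) (hσ i), ?_, ?_⟩
  · rw [htrans]
    have : (fun i => σ i * (x' i / σ i)) = x' := by
      funext i
      rw [mul_comm, div_mul_cancel₀ _ (hσ i).ne']
    rw [this]
    exact (hker x').mpr hx'fix
  · intro y hy hyker
    set z' : Fin n → ℝ := fun i => σ i * y i with hz'
    have hz'pos : ∀ i, 0 < z' i := fun i => mul_pos (hσ i) (hy i)
    have hz'fix : Φp.mulVec z' = z' := by
      apply (hker z').mp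
      rw [← htrans]
      exact hyker
    obtain ⟨i₀, -, hi₀⟩ := Finset.exists_min_image Finset.univ
      (fun i => z' i / x' i) ⟨hNE.some, Finset.mem_univ _⟩
    set c : ℝ := z' i₀ / x' i₀ with hc
    have hcpos : 0 < c := div_pos (hz'pos i₀) (hx'pos i₀)
    set w : Fin n → ℝ := fun i => z' i - c * x' i with hw
    have hwnn : ∀ i, 0 ≤ w i := by
      intro i
      have h1 : c ≤ z' i / x' i := hi₀ i (Finset.mem_univ i)
      have h2 : c * x' i ≤ z' i := (le_div_iff₀ (hx'pos i)).mp h1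
      simp [hw]
      linarith
    have hwfix : Φp.mulVec w = w := by
      have : w = z' - c • x' := by funext i; simp [hw]
      rw [this, Matrix.mulVec_sub, Matrix.mulVec_smul, hz'fix, hx'fix]
    have hwi₀ : w i₀ = 0 := by
      simp only [hw, hc]
      rw [div_mul_cancel₀ _ (hx'pos i₀).ne', sub_self]
    have hw0 : w = 0 := by
      by_contra hne
      have := kernel_pos' hΦp_nonneg hΦp_irr hwfix hwnn hne i₀
      rw [hwi₀] at this
      exact lt_irrefl 0 this
    refine ⟨c, hcpos, ?_⟩
    funext i
    have h1 : z' i - c * x' i = 0 := by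
      have := congrFun hw0 i
      simpa [hw] using this
    have h2 : σ i * y i = c * x' i := by
      simp only [hz'] at h1 ⊢
      linarith
    have h3 : y i = c * x' i / σ i := by
      rw [eq_div_iff (hσ i).ne', mul_comm, h2]
    simp only [Pi.smul_apply, smul_eq_mul]
    rw [h3, mul_div_assoc]
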